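/- There exists a constant C ≥ 1, depending only on κ, such that the following holds (large cut-off regime, upper inclusion of Lemma 2.4 (2)). Let d ≥ 1, κ > 1, U > 0, t > 0 and x_min ≥ (Ut)^{κ/(κ-1)}. Then every differentiable y : [0,t] → ℝ^d with y(0) = x and ‖y'(s)‖ ≤ U·(x_min + ‖y(s)‖)^{1/κ} for all s ∈ [0,t] satisfies ‖y(s) − x‖ ≤ C·Ut·max(x_min, ‖x‖)^{1/κ} for all s ∈ [0,t]. -/

import Mathlib

open scoped NNReal in
lemma rpow_add_le_add_rpow' {a b p : ℝ} (ha : 0 ≤ a) (hb : 0 ≤ b)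
    (hp : 0 ≤ p) (hp1 : p ≤ 1) : (a + b) ^ p ≤ a ^ p + b ^ p := by
  lift a to ℝ≥0 using ha
  lift b to ℝ≥0 using hb
  have := NNReal.rpow_add_le_add_rpow a b hp hp1
  exact_mod_cast this

/-- Lemma 2.4 (2), large cut-off regime, upper inclusion: there is a constant
`C ≥ 1` depending only on `κ` such that any curve started at `x` whose speed is
bounded by `U (x_min + ‖·‖)^{1/κ}` with large cut-off `x_min ≥ (Ut)^{κ/(κ-1)}`
stays in the ball `B(x, C·Ut·max(x_min,‖x‖)^{1/κ})`. -/
theorem large_cutoff_upper_inclusion (κ : ℝ) (hκ : 1 < κ) :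
    ∃ C : ℝ, 1 ≤ C ∧
      ∀ (d : ℕ), 1 ≤ d →
        ∀ U t xmin : ℝ, 0 < U → 0 < t →
          (U * t) ^ (κ / (κ - 1)) ≤ xmin →
          ∀ x : EuclideanSpace ℝ (Fin d),
            ∀ y y' : ℝ → EuclideanSpace ℝ (Fin d), y 0 = x →
              (∀ s ∈ Set.Icc (0 : ℝ) t, HasDerivAt y (y' s) s) →
              (∀ s ∈ Set.Icc (0 : ℝ) t, ‖y' s‖ ≤ U * (xmin + ‖y s‖) ^ (1 / κ)) →
              ∀ s ∈ Set.Icc (0 : ℝ) t,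
                ‖y s - x‖ ≤ C * (U * t) * (max xmin ‖x‖) ^ (1 / κ) := by
  refine ⟨9, by norm_num, ?_⟩
  intro d hd U t xmin hU ht hxmin x y y' hy0 hderiv hspeed
  set M := max xmin ‖x‖ with hM
  have hκ0 : (0:ℝ) < κ := by linarith
  have hκ1 : (0:ℝ) < κ - 1 := by linarith
  have h1κ : 0 < 1 / κ := by positivity
  have h1κ1 : 1 / κ ≤ 1 := by
    rw [div_le_one hκ0]; linarith
  have hUt : 0 < U * t := mul_pos hU ht
  have hxminpos : 0 < xmin := lt_of_lt_of_le (Real.rpow_pos_of_pos hUt _) hxmin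
  have hMpos : 0 < M := lt_of_lt_of_le hxminpos (le_max_left _ _)
  -- Ut ≤ M ^ ((κ-1)/κ)
  have hUtM : U * t ≤ M ^ ((κ - 1) / κ) := by
    have h1 : ((U * t) ^ (κ / (κ - 1))) ^ ((κ - 1) / κ) = U * t := by
      rw [← Real.rpow_mul hUt.le]
      rw [div_mul_div_comm, mul_comm κ (κ - 1), div_self (by positivity), Real.rpow_one]
    calc U * t = ((U * t) ^ (κ / (κ - 1))) ^ ((κ - 1) / κ) := h1.symm
      _ ≤ xmin ^ ((κ - 1) / κ) :=
          Real.rpow_le_rpow (Real.rpow_nonneg hUt.le _) hxmin (by positivity)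
      _ ≤ M ^ ((κ - 1) / κ) :=
          Real.rpow_le_rpow hxminpos.le (le_max_left _ _) (by positivity)
  set K := U * M ^ (1 / κ - 1) with hKdef
  set ε := U * 3 * M ^ (1 / κ) with hεdef
  have hMκ : 0 < M ^ (1 / κ) := Real.rpow_pos_of_pos hMpos _
  have hK : 0 < K := mul_pos hU (Real.rpow_pos_of_pos hMpos _)
  have hKt : K * t ≤ 1 := by
    have : K * t = (U * t) * M ^ (1 / κ - 1) := by ring
    rw [this]
    calc (U * t) * M ^ (1 / κ - 1) ≤ M ^ ((κ - 1) / κ) * M ^ (1 / κ - 1) := by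
          apply mul_le_mul_of_nonneg_right hUtM (Real.rpow_pos_of_pos hMpos _).le
      _ = 1 := by
          rw [← Real.rpow_add hMpos]
          have : (κ - 1) / κ + (1 / κ - 1) = 0 := by field_simp; ring
          rw [this, Real.rpow_zero]
  -- Gronwall
  have hcont : ContinuousOn (fun s => y s - x) (Set.Icc 0 t) := fun s hs =>
    (((hderiv s hs).continuousAt.sub continuousAt_const)).continuousWithinAt
  have hderiv' : ∀ s ∈ Set.Ico (0:ℝ) t,
      HasDerivWithinAt (fun s => y s - x) (y' s) (Set.Ici s) s := fun s hs =>
    (((hderiv s ⟨hs.1, hs.2.le⟩).sub_const x).hasDerivWithinAt)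
  have hbound : ∀ s ∈ Set.Ico (0:ℝ) t, ‖y' s‖ ≤ K * ‖y s - x‖ + ε := by
    intro s hs
    have hs' : s ∈ Set.Icc (0:ℝ) t := ⟨hs.1, hs.2.le⟩
    set z := ‖y s - x‖ with hz
    have hz0 : 0 ≤ z := norm_nonneg _
    have step1 : (xmin + ‖y s‖) ^ (1 / κ) ≤ (2 * M + z) ^ (1 / κ) := by
      apply Real.rpow_le_rpow (by positivity) _ h1κ.le
      have : ‖y s‖ ≤ ‖x‖ + z := by
        have := norm_sub_norm_le (y s) x
        linarith
      have hxM : ‖x‖ ≤ M := le_max_right _ _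
      have hxminM : xmin ≤ M := le_max_left _ _
      linarith
    have step2 : (2 * M + z) ^ (1 / κ) ≤ (2 * M) ^ (1 / κ) + z ^ (1 / κ) :=
      rpow_add_le_add_rpow' (by positivity) hz0 h1κ.le h1κ1
    have step3 : (2 * M) ^ (1 / κ) ≤ 2 * M ^ (1 / κ) := by
      rw [Real.mul_rpow (by norm_num) hMpos.le]
      apply mul_le_mul_of_nonneg_right _ hMκ.le
      calc (2:ℝ) ^ (1 / κ) ≤ 2 ^ (1:ℝ) := Real.rpow_le_rpow_of_exponent_le one_le_two h1κ1
        _ = 2 := Real.rpow_one 2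
    have step4 : z ^ (1 / κ) ≤ M ^ (1 / κ) + M ^ (1 / κ - 1) * z := by
      rcases le_or_gt z M with hzM | hzM
      · have h4 : z ^ (1 / κ) ≤ M ^ (1 / κ) := Real.rpow_le_rpow hz0 hzM h1κ.le
        have hnn : 0 ≤ M ^ (1 / κ - 1) * z :=
          mul_nonneg (Real.rpow_pos_of_pos hMpos _).le hz0
        linarith
      · have hzpos : 0 < z := hMpos.trans hzM
        have h4 : z ^ (1 / κ - 1) ≤ M ^ (1 / κ - 1) :=
          Real.rpow_le_rpow_of_nonpos hMpos hzM.le (by linarith)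
        have heq : z ^ (1 / κ - 1) * z = z ^ (1 / κ) := by
          rw [← Real.rpow_add_one hzpos.ne']; norm_num
        have h5 : z ^ (1 / κ - 1) * z ≤ M ^ (1 / κ - 1) * z :=
          mul_le_mul_of_nonneg_right h4 hz0
        rw [← heq]
        linarith
    calc ‖y' s‖ ≤ U * (xmin + ‖y s‖) ^ (1 / κ) := hspeed s hs'
      _ ≤ U * (2 * M ^ (1 / κ) + (M ^ (1 / κ) + M ^ (1 / κ - 1) * z)) := by
          apply mul_le_mul_of_nonneg_left _ hU.le
          linarith
      _ = K * z + ε := by rw [hKdef, hεdef]; ring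
  have hgron := norm_le_gronwallBound_of_norm_deriv_right_le (δ := 0) hcont hderiv'
    (by rw [hy0]; simp) hbound
  intro s hs
  have hb := hgron s hs
  rw [gronwallBound_of_K_ne_0 hK.ne'] at hb
  simp only [sub_zero, zero_mul, zero_add] at hb
  -- exp (K s) - 1 ≤ K s * exp (K s) ≤ K t * e
  have hKs0 : 0 ≤ K * s := mul_nonneg hK.le hs.1
  have hKst : K * s ≤ K * t := mul_le_mul_of_nonneg_left hs.2 hK.le
  have hexp : Real.exp (K * s) - 1 ≤ (K * s) * Real.exp (K * s) := by
    have h := Real.add_one_le_exp (-(K * s))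
    have hme : Real.exp (K * s) * Real.exp (-(K * s)) = 1 := by
      rw [← Real.exp_add]; simp
    have h2 := mul_le_mul_of_nonneg_left h (Real.exp_pos (K * s)).le
    nlinarith
  have hexpKs : Real.exp (K * s) ≤ Real.exp 1 := Real.exp_le_exp.mpr (le_trans hKst hKt)
  have hfinal : ε / K * (Real.exp (K * s) - 1) ≤ ε * t * Real.exp 1 := by
    have hεpos : 0 < ε := by positivity
    calc ε / K * (Real.exp (K * s) - 1) ≤ ε / K * ((K * s) * Real.exp (K * s)) := by
          apply mul_le_mul_of_nonneg_left hexp (by positivity)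
      _ = ε * s * Real.exp (K * s) := by field_simp
      _ ≤ ε * t * Real.exp 1 := by
          apply mul_le_mul (mul_le_mul_of_nonneg_left hs.2 hεpos.le) hexpKs
            (Real.exp_pos _).le (by positivity)
  have hlast : ε * t * Real.exp 1 ≤ 9 * (U * t) * M ^ (1 / κ) := by
    have he : Real.exp 1 ≤ 3 := by
      have := Real.exp_one_lt_d9
      linarith
    calc ε * t * Real.exp 1 ≤ ε * t * 3 := by
          apply mul_le_mul_of_nonneg_left he (by positivity)
      _ = 9 * (U * t) * M ^ (1 / κ) := by rw [hεdef]; ring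
  calc ‖y s - x‖ ≤ ε / K * (Real.exp (K * s) - 1) := hb
    _ ≤ ε * t * Real.exp 1 := hfinal
    _ ≤ 9 * (U * t) * M ^ (1 / κ) := hlast
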